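/- Let p be a prime greater than 5, and in the generalized Petersen graph GP(p,2) set X = {v₀, v₂, u₁} and Y = {v₁, v₃, u₂}. Then there exists a family of nine paths P_{x,y} in GP(p,2), one for each pair (x,y) ∈ X × Y, such that P_{x,y} has endpoints x and y, no internal vertex of any of the nine paths lies in X ∪ Y, and any two distinct paths of the family meet only in common endpoints (their internal vertex sets are pairwise disjoint and internal vertices are distinct from all endpoints of the other paths). In particular, GP(p,2) contains a subdivision of the complete bipartite graph K_{3,3}. -/

import Mathlib

/-- The generalized Petersen graph `GP n k` on vertex set `ZMod n ⊕ ZMod n`: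
`Sum.inl i` is the outer vertex `v i`, `Sum.inr i` is the inner vertex `u i`,
with edges `v i ~ v (i+1)`, `v i ~ u i`, and `u i ~ u (i+k)`. -/
def GP (n k : ℕ) : SimpleGraph (ZMod n ⊕ ZMod n) :=
  SimpleGraph.fromRel (fun x y =>
    (∃ i : ZMod n, x = Sum.inl i ∧ y = Sum.inl (i + 1)) ∨
    (∃ i : ZMod n, x = Sum.inl i ∧ y = Sum.inr i) ∨
    (∃ i : ZMod n, x = Sum.inr i ∧ y = Sum.inr (i + (k : ZMod n))))

/-- The branch vertex set `X = {v 0, v 2, u 1}` of Case 3a of the paper's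
Lemma 4.2, as an indexed family. -/
def Xv (p : ℕ) : Fin 3 → ZMod p ⊕ ZMod p := ![Sum.inl 0, Sum.inl 2, Sum.inr 1]

/-- The branch vertex set `Y = {v 1, v 3, u 2}` of Case 3a of the paper's
Lemma 4.2, as an indexed family. -/
def Yv (p : ℕ) : Fin 3 → ZMod p ⊕ ZMod p := ![Sum.inl 1, Sum.inl 3, Sum.inr 2]

namespace GPaux

open SimpleGraph

/-- Dependent 3-way chooser. -/
def pick {α : Fin 3 → Sort*} (x : α 0) (y : α 1) (z : α 2) : ∀ i, α i :=
  fun i => match i with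
  | 0 => x | 1 => y | 2 => z

@[simp] lemma pick_zero {α : Fin 3 → Sort*} (x : α 0) (y : α 1) (z : α 2) :
    pick x y z 0 = x := rfl
@[simp] lemma pick_one {α : Fin 3 → Sort*} (x : α 0) (y : α 1) (z : α 2) :
    pick x y z 1 = y := rfl
@[simp] lemma pick_two {α : Fin 3 → Sort*} (x : α 0) (y : α 1) (z : α 2) :
    pick x y z 2 = z := rfl

@[simp] lemma fin3_mk_two {h : 2 < 3} : (⟨2, h⟩ : Fin 3) = 2 := rfl

variable {p : ℕ}

lemma adj_vv (h1 : (1 : ZMod p) ≠ 0) (i : ZMod p) :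
    (GP p 2).Adj (Sum.inl i) (Sum.inl (i + 1)) := by
  rw [GP, SimpleGraph.fromRel_adj]
  exact ⟨by simpa [left_eq_add] using h1, Or.inl (Or.inl ⟨i, rfl, rfl⟩)⟩

lemma adj_vu (i : ZMod p) : (GP p 2).Adj (Sum.inl i) (Sum.inr i) := by
  rw [GP, SimpleGraph.fromRel_adj]
  exact ⟨by simp, Or.inl (Or.inr (Or.inl ⟨i, rfl, rfl⟩))⟩

lemma adj_uu (h2 : (2 : ZMod p) ≠ 0) (i : ZMod p) :
    (GP p 2).Adj (Sum.inr i) (Sum.inr (i + 2)) := by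
  rw [GP, SimpleGraph.fromRel_adj]
  exact ⟨by simpa [left_eq_add] using h2,
    Or.inl (Or.inr (Or.inr ⟨i, rfl, by norm_num⟩))⟩

/-- The outer walk `v s, v (s+1), …, v (s+n)`. -/
def chainO (p : ℕ) (h1 : (1 : ZMod p) ≠ 0) :
    (n : ℕ) → (s : ZMod p) → (GP p 2).Walk (Sum.inl s) (Sum.inl (s + (n : ZMod p)))
  | 0, s => Walk.nil.copy rfl (by simp)
  | n+1, s => (Walk.cons (adj_vv h1 s) (chainO p h1 n (s+1))).copy rfl
      (congrArg Sum.inl (by push_cast; ring))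

lemma chainO_support (h1 : (1 : ZMod p) ≠ 0) (n : ℕ) (s : ZMod p) (v : ZMod p ⊕ ZMod p) :
    v ∈ (chainO p h1 n s).support ↔ ∃ k : ℕ, k ≤ n ∧ v = Sum.inl (s + (k : ZMod p)) := by
  induction n generalizing s with
  | zero => simp [chainO]
  | succ n ih =>
    rw [chainO]
    rw [SimpleGraph.Walk.support_copy, SimpleGraph.Walk.support_cons]
    simp only [List.mem_cons, ih]
    constructor
    · rintro (rfl | ⟨k, hk, rfl⟩)
      · exact ⟨0, by omega, by simp⟩
      · exact ⟨k+1, by omega, congrArg Sum.inl (by push_cast; ring)⟩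
    · rintro ⟨k, hk, rfl⟩
      match k with
      | 0 => exact Or.inl (by simp)
      | k+1 => exact Or.inr ⟨k, by omega, congrArg Sum.inl (by push_cast; ring)⟩

lemma chainO_isPath (h1 : (1 : ZMod p) ≠ 0) (n : ℕ) (hn : n < p) (s : ZMod p) :
    (chainO p h1 n s).IsPath := by
  haveI : NeZero p := ⟨by omega⟩
  induction n generalizing s with
  | zero => simp [chainO]
  | succ n ih =>
    rw [chainO, SimpleGraph.Walk.isPath_copy, SimpleGraph.Walk.cons_isPath_iff]
    refine ⟨ih (by omega) _, ?_⟩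
    rw [chainO_support]
    rintro ⟨k, hk, hv⟩
    have h := Sum.inl.inj hv
    have h0 : ((k + 1 : ℕ) : ZMod p) = 0 := by
      push_cast
      linear_combination -h
    have hd := (ZMod.natCast_eq_zero_iff _ _).mp h0
    have := Nat.le_of_dvd (by omega) hd
    omega

/-- The inner walk `u s, u (s+2), …, u (s+2n)`. -/
def chainI (p : ℕ) (h2 : (2 : ZMod p) ≠ 0) :
    (n : ℕ) → (s : ZMod p) → (GP p 2).Walk (Sum.inr s) (Sum.inr (s + ((2*n : ℕ) : ZMod p)))
  | 0, s => Walk.nil.copy rfl (by simp)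
  | n+1, s => (Walk.cons (adj_uu h2 s) (chainI p h2 n (s+2))).copy rfl
      (congrArg Sum.inr (by push_cast; ring))

lemma chainI_support (h2 : (2 : ZMod p) ≠ 0) (n : ℕ) (s : ZMod p) (v : ZMod p ⊕ ZMod p) :
    v ∈ (chainI p h2 n s).support ↔ ∃ k : ℕ, k ≤ n ∧ v = Sum.inr (s + ((2*k : ℕ) : ZMod p)) := by
  induction n generalizing s with
  | zero => simp [chainI]
  | succ n ih =>
    rw [chainI]
    rw [SimpleGraph.Walk.support_copy, SimpleGraph.Walk.support_cons]
    simp only [List.mem_cons, ih]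
    constructor
    · rintro (rfl | ⟨k, hk, rfl⟩)
      · exact ⟨0, by omega, by simp⟩
      · exact ⟨k+1, by omega, congrArg Sum.inr (by push_cast; ring)⟩
    · rintro ⟨k, hk, rfl⟩
      match k with
      | 0 => exact Or.inl (by simp)
      | k+1 => exact Or.inr ⟨k, by omega, congrArg Sum.inr (by push_cast; ring)⟩

lemma chainI_isPath (hp : p.Prime) (hgt : 2 < p) (h2 : (2 : ZMod p) ≠ 0) (n : ℕ) (hn : n < p)
    (s : ZMod p) :
    (chainI p h2 n s).IsPath := by
  haveI : NeZero p := ⟨by omega⟩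
  induction n generalizing s with
  | zero => simp [chainI]
  | succ n ih =>
    rw [chainI, SimpleGraph.Walk.isPath_copy, SimpleGraph.Walk.cons_isPath_iff]
    refine ⟨ih (by omega) _, ?_⟩
    rw [chainI_support]
    rintro ⟨k, hk, hv⟩
    have h := Sum.inr.inj hv
    have h0 : ((2*(k + 1) : ℕ) : ZMod p) = 0 := by
      push_cast at h ⊢
      linear_combination -h
    have hd := (ZMod.natCast_eq_zero_iff _ _).mp h0
    rcases (Nat.Prime.dvd_mul hp).mp hd with h' | h'
    · have := Nat.le_of_dvd (by omega) h'
      omega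
    · have := Nat.le_of_dvd (by omega) h'
      omega

/-- The sets of internal vertices of the nine paths. -/
def Iset (p : ℕ) : Fin 3 → Fin 3 → Set (ZMod p ⊕ ZMod p) :=
  ![![∅, {v | ∃ k : ℕ, 0 < k ∧ k < p - 3 ∧ v = Sum.inl ((3 : ZMod p) + (k : ZMod p))},
      {Sum.inr 0}],
    ![∅, ∅, ∅],
    ![∅, {Sum.inr 3},
      {v | ∃ k : ℕ, 0 < k ∧ k < (p - 1) / 2 ∧
        v = Sum.inr ((2 : ZMod p) + ((2 * k : ℕ) : ZMod p))}]]

end GPaux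

set_option maxHeartbeats 2000000 in
/-- Case 3a of the proof of the paper's Lemma 4.2: for a prime `p > 5`, with
`X = {v 0, v 2, u 1}` and `Y = {v 1, v 3, u 2}`, there is a family of nine
paths in `GP p 2`, one joining each `x ∈ X` to each `y ∈ Y`, such that no
internal vertex of any path lies in `X ∪ Y`, and any two distinct paths of the
family meet only in common endpoints.  (This exhibits a subdivision of
`K_{3,3}` in `GP p 2`.) -/
theorem GP_contains_K33_subdivision (p : ℕ) (hp : p.Prime) (hp5 : 5 < p) :
    ∃ P : ∀ a b : Fin 3, (GP p 2).Walk (Xv p a) (Yv p b),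
      (∀ a b : Fin 3, (P a b).IsPath) ∧
      (∀ a b : Fin 3, ∀ v ∈ (P a b).support,
        v ∈ Set.range (Xv p) ∪ Set.range (Yv p) → v = Xv p a ∨ v = Yv p b) ∧
      (∀ a b a' b' : Fin 3, (a, b) ≠ (a', b') →
        ∀ v : ZMod p ⊕ ZMod p, v ∈ (P a b).support → v ∈ (P a' b').support →
          (v = Xv p a ∨ v = Yv p b) ∧ (v = Xv p a' ∨ v = Yv p b')) := by
  classical
  have hp2 : 2 ≤ p := hp.two_le
  have hodd : p % 2 = 1 := Nat.odd_iff.mp (hp.odd_of_ne_two (by omega))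
  -- basic cast arithmetic
  have hcast : ∀ a c : ℕ, a ≤ p + 1 → c < p → ((a : ZMod p) = (c : ZMod p)) →
      a = c ∨ a = p + c := by
    intro a c ha hc h
    have h' : a % p = c % p := (ZMod.natCast_eq_natCast_iff a c p).mp h
    rcases Nat.lt_or_ge a p with hlt | hge
    · left; rwa [Nat.mod_eq_of_lt hlt, Nat.mod_eq_of_lt hc] at h'
    · right
      rw [Nat.mod_eq_sub_mod hge, Nat.mod_eq_of_lt (by omega), Nat.mod_eq_of_lt hc] at h'
      omega
  have hinj : ∀ a c : ℕ, a < p → c < p → ((a : ZMod p) = (c : ZMod p)) → a = c := by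
    intro a c ha hc h
    rcases hcast a c (by omega) hc h with h | h <;> omega
  have h1 : (1 : ZMod p) ≠ 0 := by
    intro h
    have := hinj 1 0 (by omega) (by omega) (by exact_mod_cast h)
    omega
  have h2 : (2 : ZMod p) ≠ 0 := by
    intro h
    have := hinj 2 0 (by omega) (by omega) (by exact_mod_cast h)
    omega
  have ne03 : (0 : ZMod p) ≠ 3 := by
    intro h
    have := hinj 0 3 (by omega) (by omega) (by exact_mod_cast h)
    omega
  -- endpoint identities for the two long paths
  have e1 : (3 : ZMod p) + ((p - 3 : ℕ) : ZMod p) = 0 := by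
    have h3 : ((p - 3 : ℕ) : ZMod p) = ((p : ℕ) : ZMod p) - ((3:ℕ) : ZMod p) :=
      Nat.cast_sub (by omega)
    rw [h3, ZMod.natCast_self]
    push_cast
    ring
  have e2 : (2 : ZMod p) + ((2 * ((p-1)/2) : ℕ) : ZMod p) = 1 := by
    have hh : 2 * ((p-1)/2) = p - 1 := by omega
    rw [hh]
    have h3 : ((p - 1 : ℕ) : ZMod p) = ((p : ℕ) : ZMod p) - ((1:ℕ) : ZMod p) :=
      Nat.cast_sub (by omega)
    rw [h3, ZMod.natCast_self]
    push_cast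
    ring
  -- helpers for modular case analysis
  have houter : ∀ k c : ℕ, k ≤ p - 3 → c < 4 →
      ((3 : ZMod p) + (k : ZMod p) = ((c : ℕ) : ZMod p)) → 3 + k = c ∨ 3 + k = p + c := by
    intro k c hk hc h
    have h' : ((3 + k : ℕ) : ZMod p) = ((c : ℕ) : ZMod p) := by
      push_cast
      linear_combination h
    exact hcast _ _ (by omega) (by omega) h'
  have hinner : ∀ k c : ℕ, k ≤ (p-1)/2 → c < 4 →
      ((2 : ZMod p) + ((2*k : ℕ) : ZMod p) = ((c : ℕ) : ZMod p)) →
      2 + 2*k = c ∨ 2 + 2*k = p + c := by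
    intro k c hk hc h
    have h' : ((2 + 2*k : ℕ) : ZMod p) = ((c : ℕ) : ZMod p) := by
      push_cast at h ⊢
      linear_combination h
    exact hcast _ _ (by omega) (by omega) h'
  -- adjacency of the specific edges
  have aVV01 : (GP p 2).Adj (Sum.inl (0 : ZMod p)) (Sum.inl 1) := by
    have h := GPaux.adj_vv h1 0
    norm_num at h
    exact h
  have aVV12 : (GP p 2).Adj (Sum.inl (1 : ZMod p)) (Sum.inl 2) := by
    have h := GPaux.adj_vv h1 1
    norm_num at h
    exact h
  have aVV23 : (GP p 2).Adj (Sum.inl (2 : ZMod p)) (Sum.inl 3) := by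
    have h := GPaux.adj_vv h1 2
    norm_num at h
    exact h
  have aUU02 : (GP p 2).Adj (Sum.inr (0 : ZMod p)) (Sum.inr 2) := by
    have h := GPaux.adj_uu h2 0
    norm_num at h
    exact h
  have aUU13 : (GP p 2).Adj (Sum.inr (1 : ZMod p)) (Sum.inr 3) := by
    have h := GPaux.adj_uu h2 1
    norm_num at h
    exact h
  -- the nine walks, with support descriptions and path property
  obtain ⟨W00, hs00, hp00⟩ : ∃ W : (GP p 2).Walk (Sum.inl (0:ZMod p)) (Sum.inl 1),
      W.support = [Sum.inl 0, Sum.inl 1] ∧ W.IsPath := by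
    refine ⟨aVV01.toWalk, by simp [SimpleGraph.Adj.toWalk], ?_⟩
    simp [SimpleGraph.Adj.toWalk, SimpleGraph.Walk.cons_isPath_iff, aVV01.ne]
  obtain ⟨W01, hs01, hp01⟩ : ∃ W : (GP p 2).Walk (Sum.inl (0:ZMod p)) (Sum.inl 3),
      (∀ v, v ∈ W.support ↔ ∃ k : ℕ, k ≤ p - 3 ∧ v = Sum.inl ((3:ZMod p) + (k : ZMod p))) ∧
      W.IsPath := by
    refine ⟨((GPaux.chainO p h1 (p-3) 3).copy rfl (congrArg Sum.inl e1)).reverse, ?_, ?_⟩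
    · intro v
      rw [SimpleGraph.Walk.support_reverse, List.mem_reverse, SimpleGraph.Walk.support_copy,
        GPaux.chainO_support]
    · exact (((SimpleGraph.Walk.isPath_copy _ _ _).mpr
        (GPaux.chainO_isPath h1 _ (by omega) _)).reverse)
  obtain ⟨W02, hs02, hp02⟩ : ∃ W : (GP p 2).Walk (Sum.inl (0:ZMod p)) (Sum.inr 2),
      W.support = [Sum.inl 0, Sum.inr 0, Sum.inr 2] ∧ W.IsPath := by
    refine ⟨SimpleGraph.Walk.cons (GPaux.adj_vu 0) aUU02.toWalk,
      by simp [SimpleGraph.Adj.toWalk], ?_⟩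
    simp [SimpleGraph.Adj.toWalk, SimpleGraph.Walk.cons_isPath_iff, aUU02.ne]
  obtain ⟨W10, hs10, hp10⟩ : ∃ W : (GP p 2).Walk (Sum.inl (2:ZMod p)) (Sum.inl 1),
      W.support = [Sum.inl 2, Sum.inl 1] ∧ W.IsPath := by
    refine ⟨aVV12.symm.toWalk, by simp [SimpleGraph.Adj.toWalk], ?_⟩
    simp [SimpleGraph.Adj.toWalk, SimpleGraph.Walk.cons_isPath_iff, aVV12.symm.ne]
  obtain ⟨W11, hs11, hp11⟩ : ∃ W : (GP p 2).Walk (Sum.inl (2:ZMod p)) (Sum.inl 3),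
      W.support = [Sum.inl 2, Sum.inl 3] ∧ W.IsPath := by
    refine ⟨aVV23.toWalk, by simp [SimpleGraph.Adj.toWalk], ?_⟩
    simp [SimpleGraph.Adj.toWalk, SimpleGraph.Walk.cons_isPath_iff, aVV23.ne]
  obtain ⟨W12, hs12, hp12⟩ : ∃ W : (GP p 2).Walk (Sum.inl (2:ZMod p)) (Sum.inr 2),
      W.support = [Sum.inl 2, Sum.inr 2] ∧ W.IsPath := by
    refine ⟨(GPaux.adj_vu 2).toWalk, by simp [SimpleGraph.Adj.toWalk], ?_⟩
    simp [SimpleGraph.Adj.toWalk, SimpleGraph.Walk.cons_isPath_iff, (GPaux.adj_vu 2).ne]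
  obtain ⟨W20, hs20, hp20⟩ : ∃ W : (GP p 2).Walk (Sum.inr (1:ZMod p)) (Sum.inl 1),
      W.support = [Sum.inr 1, Sum.inl 1] ∧ W.IsPath := by
    refine ⟨(GPaux.adj_vu 1).symm.toWalk, by simp [SimpleGraph.Adj.toWalk], ?_⟩
    simp [SimpleGraph.Adj.toWalk, SimpleGraph.Walk.cons_isPath_iff, (GPaux.adj_vu 1).symm.ne]
  obtain ⟨W21, hs21, hp21⟩ : ∃ W : (GP p 2).Walk (Sum.inr (1:ZMod p)) (Sum.inl 3),
      W.support = [Sum.inr 1, Sum.inr 3, Sum.inl 3] ∧ W.IsPath := by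
    refine ⟨SimpleGraph.Walk.cons aUU13 (GPaux.adj_vu 3).symm.toWalk,
      by simp [SimpleGraph.Adj.toWalk], ?_⟩
    simp [SimpleGraph.Adj.toWalk, SimpleGraph.Walk.cons_isPath_iff, aUU13.ne,
      (GPaux.adj_vu 3).symm.ne]
  obtain ⟨W22, hs22, hp22⟩ : ∃ W : (GP p 2).Walk (Sum.inr (1:ZMod p)) (Sum.inr 2),
      (∀ v, v ∈ W.support ↔ ∃ k : ℕ, k ≤ (p-1)/2 ∧
        v = Sum.inr ((2:ZMod p) + ((2*k : ℕ) : ZMod p))) ∧ W.IsPath := by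
    refine ⟨((GPaux.chainI p h2 ((p-1)/2) 2).copy rfl (congrArg Sum.inr e2)).reverse, ?_, ?_⟩
    · intro v
      rw [SimpleGraph.Walk.support_reverse, List.mem_reverse, SimpleGraph.Walk.support_copy,
        GPaux.chainI_support]
    · exact (((SimpleGraph.Walk.isPath_copy _ _ _).mpr
        (GPaux.chainI_isPath hp (by omega) h2 _ (by omega) _)).reverse)
  -- the support inclusion
  have hsub : ∀ a b : Fin 3, ∀ v ∈
      ((GPaux.pick
        (GPaux.pick W00 W01 W02 : ∀ b, (GP p 2).Walk (Xv p 0) (Yv p b))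
        (GPaux.pick W10 W11 W12)
        (GPaux.pick W20 W21 W22) : ∀ a b, (GP p 2).Walk (Xv p a) (Yv p b)) a b).support,
      v = Xv p a ∨ v = Yv p b ∨ v ∈ GPaux.Iset p a b := by
    intro a b
    fin_cases a <;> fin_cases b <;>
      simp only [Fin.mk_zero, Fin.mk_one, GPaux.fin3_mk_two, Fin.isValue,
        GPaux.pick_zero, GPaux.pick_one, GPaux.pick_two, GPaux.Iset, Xv, Yv,
        Matrix.cons_val_zero, Matrix.cons_val_one, Matrix.head_cons, Matrix.cons_val_two,
        Matrix.tail_cons]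
    · intro v hv
      change v ∈ W00.support at hv
      rw [hs00] at hv
      simp only [List.mem_cons, List.not_mem_nil, or_false] at hv
      tauto
    · intro v hv
      obtain ⟨k, hk, rfl⟩ := (hs01 v).mp hv
      rcases Nat.eq_zero_or_pos k with rfl | hk0
      · right; left
        norm_num
      · rcases eq_or_ne k (p-3) with rfl | hk1
        · left
          rw [e1]
        · right; right
          exact ⟨k, hk0, by omega, rfl⟩
    · intro v hv
      change v ∈ W02.support at hv
      rw [hs02] at hv
      simp only [List.mem_cons, List.not_mem_nil, or_false] at hv
      rcases hv with rfl | rfl | rfl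
      · tauto
      · right; right; rfl
      · tauto
    · intro v hv
      change v ∈ W10.support at hv
      rw [hs10] at hv
      simp only [List.mem_cons, List.not_mem_nil, or_false] at hv
      tauto
    · intro v hv
      change v ∈ W11.support at hv
      rw [hs11] at hv
      simp only [List.mem_cons, List.not_mem_nil, or_false] at hv
      tauto
    · intro v hv
      change v ∈ W12.support at hv
      rw [hs12] at hv
      simp only [List.mem_cons, List.not_mem_nil, or_false] at hv
      tauto
    · intro v hv
      change v ∈ W20.support at hv
      rw [hs20] at hv
      simp only [List.mem_cons, List.not_mem_nil, or_false] at hv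
      tauto
    · intro v hv
      change v ∈ W21.support at hv
      rw [hs21] at hv
      simp only [List.mem_cons, List.not_mem_nil, or_false] at hv
      rcases hv with rfl | rfl | rfl
      · tauto
      · right; right; rfl
      · tauto
    · intro v hv
      obtain ⟨k, hk, rfl⟩ := (hs22 v).mp hv
      rcases Nat.eq_zero_or_pos k with rfl | hk0
      · right; left
        norm_num
      · rcases eq_or_ne k ((p-1)/2) with rfl | hk1
        · left
          rw [e2]
        · right; right
          exact ⟨k, hk0, by omega, rfl⟩
  -- internal vertices avoid X ∪ Y
  have hIXY : ∀ a b : Fin 3, ∀ v, v ∈ GPaux.Iset p a b →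
      v ∉ (Set.range (Xv p) ∪ Set.range (Yv p)) := by
    clear hsub
    clear hp00 hp01 hp02 hp10 hp11 hp12 hp20 hp21 hp22
    clear hs00 hs01 hs02 hs10 hs11 hs12 hs20 hs21 hs22
    clear W00 W01 W02 W10 W11 W12 W20 W21 W22
    intro a b v hv hmem
    have hmem' : v = Sum.inl 0 ∨ v = Sum.inl 2 ∨ v = Sum.inr 1 ∨ v = Sum.inl 1 ∨
        v = Sum.inl 3 ∨ v = Sum.inr 2 := by
      rcases hmem with ⟨i, rfl⟩ | ⟨i, rfl⟩ <;> fin_cases i <;> simp [Xv, Yv]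
    clear hmem
    fin_cases a <;> fin_cases b <;>
      simp only [Fin.mk_zero, Fin.mk_one, GPaux.fin3_mk_two, Fin.isValue,
        GPaux.Iset, Matrix.cons_val_zero, Matrix.cons_val_one, Matrix.head_cons,
        Matrix.cons_val_two, Matrix.tail_cons, Set.mem_empty_iff_false, Set.mem_setOf_eq,
        Set.mem_singleton_iff] at hv
    -- (0,1) : interior of the long outer path
    · obtain ⟨k, hk0, hk1, rfl⟩ := hv
      have hb : ∀ c : ℕ, c < 4 → (3 : ZMod p) + (k : ZMod p) = ((c : ℕ) : ZMod p) → False := by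
        intro c hc h
        rcases houter k c (by omega) hc h with h' | h' <;> omega
      rcases hmem' with h | h | h | h | h | h
      · exact hb 0 (by omega) (by exact_mod_cast Sum.inl.inj h)
      · exact hb 2 (by omega) (by exact_mod_cast Sum.inl.inj h)
      · exact Sum.inl_ne_inr h
      · exact hb 1 (by omega) (by exact_mod_cast Sum.inl.inj h)
      · exact hb 3 (by omega) (by exact_mod_cast Sum.inl.inj h)
      · exact Sum.inl_ne_inr h
    -- (0,2) : interior {u 0}
    · subst hv
      rcases hmem' with h | h | h | h | h | h
      · exact Sum.inr_ne_inl h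
      · exact Sum.inr_ne_inl h
      · have := hinj 0 1 (by omega) (by omega) (by exact_mod_cast Sum.inr.inj h); omega
      · exact Sum.inr_ne_inl h
      · exact Sum.inr_ne_inl h
      · have := hinj 0 2 (by omega) (by omega) (by exact_mod_cast Sum.inr.inj h); omega
    -- (2,1) : interior {u 3}
    · subst hv
      rcases hmem' with h | h | h | h | h | h
      · exact Sum.inr_ne_inl h
      · exact Sum.inr_ne_inl h
      · have := hinj 3 1 (by omega) (by omega) (by exact_mod_cast Sum.inr.inj h); omega
      · exact Sum.inr_ne_inl h
      · exact Sum.inr_ne_inl h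
      · have := hinj 3 2 (by omega) (by omega) (by exact_mod_cast Sum.inr.inj h); omega
    -- (2,2) : interior of the long inner path
    · obtain ⟨k, hk0, hk1, rfl⟩ := hv
      have hb : ∀ c : ℕ, c < 4 →
          (2 : ZMod p) + ((2*k : ℕ) : ZMod p) = ((c : ℕ) : ZMod p) → False := by
        intro c hc h
        rcases hinner k c (by omega) hc h with h' | h' <;> omega
      rcases hmem' with h | h | h | h | h | h
      · exact Sum.inr_ne_inl h
      · exact Sum.inr_ne_inl h
      · exact hb 1 (by omega) (by exact_mod_cast Sum.inr.inj h)
      · exact Sum.inr_ne_inl h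
      · exact Sum.inr_ne_inl h
      · exact hb 2 (by omega) (by exact_mod_cast Sum.inr.inj h)
  -- the internal-vertex sets are pairwise disjoint
  have hIdisj : ∀ a b a' b' : Fin 3, (a, b) ≠ (a', b') → ∀ v,
      v ∈ GPaux.Iset p a b → v ∈ GPaux.Iset p a' b' → False := by
    clear hsub hIXY
    clear hp00 hp01 hp02 hp10 hp11 hp12 hp20 hp21 hp22
    clear hs00 hs01 hs02 hs10 hs11 hs12 hs20 hs21 hs22
    clear W00 W01 W02 W10 W11 W12 W20 W21 W22
    intro a b a' b' hnepair v hv hv'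
    fin_cases a <;> fin_cases b <;> fin_cases a' <;> fin_cases b'
    all_goals try exact hnepair rfl
    all_goals
      simp only [Fin.mk_zero, Fin.mk_one, GPaux.fin3_mk_two, Fin.isValue,
        GPaux.Iset, Matrix.cons_val_zero, Matrix.cons_val_one, Matrix.head_cons,
        Matrix.cons_val_two, Matrix.tail_cons, Set.mem_empty_iff_false, Set.mem_setOf_eq,
        Set.mem_singleton_iff] at hv hv'
    -- 12 remaining cases
    -- (0,1)(0,2)
    · obtain ⟨k, hk0, hk1, rfl⟩ := hv
      exact Sum.inl_ne_inr hv'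
    -- (0,1)(2,1)
    · obtain ⟨k, hk0, hk1, rfl⟩ := hv
      exact Sum.inl_ne_inr hv'
    -- (0,1)(2,2)
    · obtain ⟨k, hk0, hk1, rfl⟩ := hv
      obtain ⟨k', hk0', hk1', h'⟩ := hv'
      exact Sum.inl_ne_inr h'
    -- (0,2)(0,1)
    · subst hv
      obtain ⟨k, hk0, hk1, h⟩ := hv'
      exact Sum.inr_ne_inl h
    -- (0,2)(2,1)
    · rw [hv] at hv'
      have := hinj 0 3 (by omega) (by omega) (by exact_mod_cast Sum.inr.inj hv')
      omega
    -- (0,2)(2,2)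
    · subst hv
      obtain ⟨k', hk0', hk1', h'⟩ := hv'
      rcases hinner k' 0 (by omega) (by omega)
        (by exact_mod_cast (Sum.inr.inj h').symm) with h'' | h'' <;> omega
    -- (2,1)(0,1)
    · subst hv
      obtain ⟨k, hk0, hk1, h⟩ := hv'
      exact Sum.inr_ne_inl h
    -- (2,1)(0,2)
    · rw [hv] at hv'
      have := hinj 3 0 (by omega) (by omega) (by exact_mod_cast Sum.inr.inj hv')
      omega
    -- (2,1)(2,2)
    · subst hv
      obtain ⟨k', hk0', hk1', h'⟩ := hv'
      rcases hinner k' 3 (by omega) (by omega)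
        (by exact_mod_cast (Sum.inr.inj h').symm) with h'' | h'' <;> omega
    -- (2,2)(0,1)
    · obtain ⟨k, hk0, hk1, rfl⟩ := hv
      obtain ⟨k', hk0', hk1', h'⟩ := hv'
      exact Sum.inr_ne_inl h'
    -- (2,2)(0,2)
    · obtain ⟨k, hk0, hk1, rfl⟩ := hv
      rcases hinner k 0 (by omega) (by omega)
        (by exact_mod_cast Sum.inr.inj hv') with h'' | h'' <;> omega
    -- (2,2)(2,1)
    · obtain ⟨k, hk0, hk1, rfl⟩ := hv
      rcases hinner k 3 (by omega) (by omega)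
        (by exact_mod_cast Sum.inr.inj hv') with h'' | h'' <;> omega
  -- assemble
  refine ⟨(GPaux.pick
        (GPaux.pick W00 W01 W02 : ∀ b, (GP p 2).Walk (Xv p 0) (Yv p b))
        (GPaux.pick W10 W11 W12)
        (GPaux.pick W20 W21 W22) : ∀ a b, (GP p 2).Walk (Xv p a) (Yv p b)), ?_, ?_, ?_⟩
  · intro a b
    fin_cases a <;> fin_cases b <;>
      simp only [Fin.mk_zero, Fin.mk_one, GPaux.fin3_mk_two, Fin.isValue,
        GPaux.pick_zero, GPaux.pick_one, GPaux.pick_two]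
    exacts [hp00, hp01, hp02, hp10, hp11, hp12, hp20, hp21, hp22]
  · intro a b v hv hmem
    rcases hsub a b v hv with h | h | h
    · exact Or.inl h
    · exact Or.inr h
    · exact absurd hmem (hIXY a b v h)
  · intro a b a' b' hnepair v hv hv'
    constructor
    · rcases hsub a b v hv with h | h | h
      · exact Or.inl h
      · exact Or.inr h
      · exfalso
        rcases hsub a' b' v hv' with h' | h' | h'
        · exact hIXY a b v h (Set.mem_union_left _ ⟨a', h'.symm⟩)
        · exact hIXY a b v h (Set.mem_union_right _ ⟨b', h'.symm⟩)
        · exact hIdisj a b a' b' hnepair v h h'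
    · rcases hsub a' b' v hv' with h | h | h
      · exact Or.inl h
      · exact Or.inr h
      · exfalso
        rcases hsub a b v hv with h' | h' | h'
        · exact hIXY a' b' v h (Set.mem_union_left _ ⟨a, h'.symm⟩)
        · exact hIXY a' b' v h (Set.mem_union_right _ ⟨b, h'.symm⟩)
        · exact hIdisj a' b' a b (fun hh => hnepair hh.symm) v h h'
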